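/- arXiv:1906.10537 — 2 statements merged into one kernel-verified Lean document; each statement's English description precedes it below -/
import Mathlib

section
/- Let a be a real number with |a| > 5, and let n ≥ 1 be an integer. Then the n columns of B̃_n(a,1), regarded as vectors in ℂ^{n+3}, are linearly independent, and every nonzero complex linear combination of these columns has at least 4 nonzero entries. -/
/-- Entry in position `(r, c)` (0-indexed) of the `(n+1) × n` matrix `Ẽ_n(a,1)`. -/
def Etent (a : ℝ) (r c : ℕ) : ℝ :=
  if r = c then a
  else if r + 1 = c then 1
  else if r = c + 1 then a
  else if r = c + 2 then 1
  else 0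

/-- The `(n+3) × n` matrix `B̃_n(a,1)`: first row `(1,0,…,0)`, rows `2,…,n+2` are the
rows of `Ẽ_n(a,1)`, last row `(0,…,0,1)`. -/
def Btmat (n : ℕ) (a : ℝ) : Matrix (Fin (n + 3)) (Fin n) ℝ :=
  Matrix.of fun i j =>
    if (i : ℕ) = 0 then (if (j : ℕ) = 0 then 1 else 0)
    else if (i : ℕ) = n + 2 then (if (j : ℕ) = n - 1 then 1 else 0)
    else Etent a ((i : ℕ) - 1) (j : ℕ)

open Polynomial

lemma lem2' (p q r t : ℝ) (B C : ℂ) (h1 : B*(p:ℂ) + C*(q:ℂ) = 0) (h2 : B*(r:ℂ) + C*(t:ℂ) = 0)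
    (hd : p*t - q*r ≠ 0) : B = 0 ∧ C = 0 := by
  have hd' : ((p*t - q*r : ℝ) : ℂ) ≠ 0 := by exact_mod_cast hd
  have hB : B * ((p*t - q*r : ℝ) : ℂ) = 0 := by push_cast; linear_combination (t:ℂ) * h1 - (q:ℂ) * h2
  have hC : C * ((p*t - q*r : ℝ) : ℂ) = 0 := by push_cast; linear_combination (p:ℂ) * h2 - (r:ℂ) * h1
  exact ⟨(mul_eq_zero.mp hB).resolve_right hd', (mul_eq_zero.mp hC).resolve_right hd'⟩

lemma lemG (u v w d1 d2 d3 : ℝ) (hu : 0 < u) (huv : u < v) (hvw : v < w)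
    (hd1 : d1 = 1 ∨ d1 = -1) (hd2 : d2 = 1 ∨ d2 = -1) (hd3 : d3 = 1 ∨ d3 = -1)
    (A B C : ℂ)
    (e1 : A * (u:ℂ) + B * (v:ℂ) + C * (w:ℂ) = 0)
    (e2 : A * ((v*w : ℝ):ℂ) + B * ((u*w : ℝ):ℂ) + C * ((u*v : ℝ):ℂ) = 0)
    (e3 : A * (d1:ℂ) + B * (d2:ℂ) + C * (d3:ℂ) = 0) :
    A = 0 ∧ B = 0 ∧ C = 0 := by
  push_cast at e2
  have hd1sq : (d1:ℂ) * (d1:ℂ) = 1 := by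
    rcases hd1 with h | h <;> rw [h] <;> norm_num
  have E1 : B * ((d1*d2*u - v : ℝ):ℂ) + C * ((d1*d3*u - w : ℝ):ℂ) = 0 := by
    push_cast
    linear_combination ((d1:ℂ) * u) * e3 - e1 - (A * u) * hd1sq
  have E2 : B * ((w*(u^2 - v^2) : ℝ):ℂ) + C * ((v*(u^2 - w^2) : ℝ):ℂ) = 0 := by
    push_cast
    linear_combination (u:ℂ) * e2 - ((v:ℂ)*(w:ℂ)) * e1
  have pvu : 0 < v - u := sub_pos.mpr huv
  have pwv : 0 < w - v := sub_pos.mpr hvw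
  have pwu : 0 < w - u := sub_pos.mpr (huv.trans hvw)
  have hdet : (d1*d2*u - v) * (v*(u^2 - w^2)) - (d1*d3*u - w) * (w*(u^2 - v^2)) ≠ 0 := by
    rcases hd1 with h1 | h1 <;> rcases hd2 with h2 | h2 <;> rcases hd3 with h3 | h3 <;>
        subst h1 <;> subst h2 <;> subst h3 <;> norm_num <;> intro h
    · nlinarith [mul_pos (mul_pos (mul_pos hu pvu) pwu) pwv]
    · nlinarith [mul_pos (mul_pos (mul_pos hu (by linarith : (0:ℝ) < u + w)) pvu) (by linarith : (0:ℝ) < v + w)]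
    · nlinarith [mul_pos (mul_pos (mul_pos hu (by linarith : (0:ℝ) < u + v)) pwu) (by linarith : (0:ℝ) < v + w)]
    · nlinarith [mul_pos (mul_pos (mul_pos hu (by linarith : (0:ℝ) < u + v)) (by linarith : (0:ℝ) < u + w)) pwv]
    · nlinarith [mul_pos (mul_pos (mul_pos hu (by linarith : (0:ℝ) < u + v)) (by linarith : (0:ℝ) < u + w)) pwv]
    · nlinarith [mul_pos (mul_pos (mul_pos hu (by linarith : (0:ℝ) < u + v)) pwu) (by linarith : (0:ℝ) < v + w)]
    · nlinarith [mul_pos (mul_pos (mul_pos hu (by linarith : (0:ℝ) < u + w)) pvu) (by linarith : (0:ℝ) < v + w)]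
    · nlinarith [mul_pos (mul_pos (mul_pos hu pvu) pwu) pwv]
  obtain ⟨hB, hC⟩ := lem2' _ _ _ _ B C E1 E2 hdet
  refine ⟨?_, hB, hC⟩
  rw [hB, hC] at e1
  have hA : A * (u:ℂ) = 0 := by linear_combination e1
  have hu' : (u:ℂ) ≠ 0 := by exact_mod_cast hu.ne'
  exact (mul_eq_zero.mp hA).resolve_right hu'

lemma pm_pow {x : ℝ} (h : x = 1 ∨ x = -1) (n : ℕ) : x^n = 1 ∨ x^n = -1 := by
  rcases h with h | h <;> subst h
  · exact Or.inl (one_pow n)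
  · rcases Nat.even_or_odd n with he | ho
    · exact Or.inl he.neg_one_pow
    · exact Or.inr ho.neg_one_pow

lemma key3 (s ε : ℝ) (hs : 1 < s) (hε : ε = 1 ∨ ε = -1) (α β γ : ℕ)
    (hab : α < β) (hbg : β < γ) (A B C : ℂ)
    (h1 : A * ((-ε*s : ℝ):ℂ)^α + B * ((-ε*s : ℝ):ℂ)^β + C * ((-ε*s : ℝ):ℂ)^γ = 0)
    (h2 : A * ((-ε/s : ℝ):ℂ)^α + B * ((-ε/s : ℝ):ℂ)^β + C * ((-ε/s : ℝ):ℂ)^γ = 0)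
    (h3 : A * (-1:ℂ)^α + B * (-1:ℂ)^β + C * (-1:ℂ)^γ = 0) :
    A = 0 ∧ B = 0 ∧ C = 0 := by
  have hs0 : (0:ℝ) < s := by linarith
  have hσ : -ε = 1 ∨ -ε = -1 := by rcases hε with h | h <;> simp [h]
  have hpm1 := pm_pow hσ α; have hpm2 := pm_pow hσ β; have hpm3 := pm_pow hσ γ
  have hu : 0 < s^α := pow_pos hs0 α
  have hv : 0 < s^β := pow_pos hs0 β
  have hw : 0 < s^γ := pow_pos hs0 γ
  have huv : s^α < s^β := pow_lt_pow_right₀ hs hab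
  have hvw : s^β < s^γ := pow_lt_pow_right₀ hs hbg
  simp only [← Complex.ofReal_pow] at h1 h2
  have r1 : ∀ m : ℕ, (-ε*s)^m = (-ε)^m * s^m := fun m => mul_pow _ _ m
  have r2 : ∀ m : ℕ, (-ε/s)^m = (-ε)^m / s^m := fun m => div_pow _ _ m
  rw [r1 α, r1 β, r1 γ] at h1
  rw [r2 α, r2 β, r2 γ] at h2
  have hmε : (-ε) * ε = -1 := by rcases hε with h | h <;> rw [h] <;> norm_num
  have r3 : ∀ m : ℕ, ((-1:ℂ))^m = (((-ε)^m * ε^m : ℝ):ℂ) := fun m => by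
    rw [← mul_pow, hmε]; push_cast; ring
  rw [r3 α, r3 β, r3 γ] at h3
  simp only [Complex.ofReal_mul, Complex.ofReal_div] at h1 h2 h3
  have cc : ∀ m : ℕ, ((s^m : ℝ):ℂ) * (((s^m : ℝ):ℂ))⁻¹ = 1 := fun m =>
    mul_inv_cancel₀ (by exact_mod_cast (pow_pos hs0 m).ne')
  have eq1 : (A * (((-ε)^α : ℝ):ℂ)) * ((s^α : ℝ):ℂ) + (B * (((-ε)^β : ℝ):ℂ)) * ((s^β : ℝ):ℂ)
      + (C * (((-ε)^γ : ℝ):ℂ)) * ((s^γ : ℝ):ℂ) = 0 := by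
    linear_combination h1
  have eq2 : (A * (((-ε)^α : ℝ):ℂ)) * ((s^β * s^γ : ℝ):ℂ) + (B * (((-ε)^β : ℝ):ℂ)) * ((s^α * s^γ : ℝ):ℂ)
      + (C * (((-ε)^γ : ℝ):ℂ)) * ((s^α * s^β : ℝ):ℂ) = 0 := by
    simp only [Complex.ofReal_mul]
    linear_combination (((s^α : ℝ):ℂ)*((s^β : ℝ):ℂ)*((s^γ : ℝ):ℂ)) * h2
      - (A*(((-ε)^α : ℝ):ℂ)*((s^β : ℝ):ℂ)*((s^γ : ℝ):ℂ)) * (cc α)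
      - (B*(((-ε)^β : ℝ):ℂ)*((s^α : ℝ):ℂ)*((s^γ : ℝ):ℂ)) * (cc β)
      - (C*(((-ε)^γ : ℝ):ℂ)*((s^α : ℝ):ℂ)*((s^β : ℝ):ℂ)) * (cc γ)
  have eq3 : (A * (((-ε)^α : ℝ):ℂ)) * ((ε^α : ℝ):ℂ) + (B * (((-ε)^β : ℝ):ℂ)) * ((ε^β : ℝ):ℂ)
      + (C * (((-ε)^γ : ℝ):ℂ)) * ((ε^γ : ℝ):ℂ) = 0 := by
    linear_combination h3
  obtain ⟨hA, hB, hC⟩ := lemG (s^α) (s^β) (s^γ) (ε^α) (ε^β) (ε^γ) hu huv hvw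
    (pm_pow hε α) (pm_pow hε β) (pm_pow hε γ) _ _ _ eq1 eq2 eq3
  have pmne : ∀ x : ℝ, (x = 1 ∨ x = -1) → (x:ℂ) ≠ 0 := by
    rintro x (h | h) <;> rw [h] <;> norm_num
  exact ⟨(mul_eq_zero.mp hA).resolve_right (pmne _ hpm1),
    (mul_eq_zero.mp hB).resolve_right (pmne _ hpm2),
    (mul_eq_zero.mp hC).resolve_right (pmne _ hpm3)⟩


def qc (a : ℝ) (d : ℕ) : ℝ :=
  if d = 0 then 1 else if d = 1 then a else if d = 2 then a else if d = 3 then 1 else 0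

noncomputable def Qpoly (a : ℝ) : Polynomial ℂ :=
  X^3 + C (a:ℂ) * X^2 + C (a:ℂ) * X + C 1

lemma Qcoeff (a : ℝ) (d : ℕ) : (Qpoly a).coeff d = ((qc a d : ℝ):ℂ) := by
  rcases d with _|_|_|_|d <;>
    simp [Qpoly, qc, coeff_X_pow, coeff_C, coeff_one]

lemma Qeval_zero (a x : ℝ) (hx : x^3 + a*x^2 + a*x + 1 = 0) :
    (Qpoly a).eval ((x:ℝ):ℂ) = 0 := by
  have : ((x^3 + a*x^2 + a*x + 1 : ℝ):ℂ) = 0 := by rw [hx]; norm_num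
  simp only [Qpoly, eval_add, eval_mul, eval_pow, eval_X, eval_C]
  push_cast at this ⊢
  linear_combination this

lemma Qroots (a : ℝ) (ha : 5 < |a|) : ∃ s ε : ℝ, 1 < s ∧ (ε = 1 ∨ ε = -1) ∧
    (Qpoly a).eval ((-ε*s : ℝ):ℂ) = 0 ∧ (Qpoly a).eval ((-ε/s : ℝ):ℂ) = 0 ∧
    (Qpoly a).eval ((-1 : ℝ):ℂ) = 0 := by
  have hm4 : 4 < |a - 1| := by
    have := abs_sub_abs_le_abs_sub a 1
    simp only [abs_one] at this; linarith
  set m := |a - 1| with hmdef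
  have hD : 0 ≤ m^2 - 4 := by nlinarith
  have hsq : Real.sqrt (m^2 - 4) ^ 2 = m^2 - 4 := Real.sq_sqrt hD
  have hsqnn : 0 ≤ Real.sqrt (m^2 - 4) := Real.sqrt_nonneg _
  set s := (m + Real.sqrt (m^2 - 4)) / 2 with hsdef
  have hs1 : 1 < s := by rw [hsdef]; nlinarith
  have hs0 : (0:ℝ) < s := by linarith
  have hquad : s^2 - m*s + 1 = 0 := by rw [hsdef]; field_simp; nlinarith [hsq]
  set ε : ℝ := if 0 ≤ a - 1 then 1 else -1 with hεdef
  have hε : ε = 1 ∨ ε = -1 := by rw [hεdef]; split <;> simp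
  have hεm : ε * (a - 1) = m := by
    rw [hεdef, hmdef]; split
    · rw [abs_of_nonneg ‹_›]; ring
    · rw [abs_of_neg (by linarith [not_le.mp ‹¬ 0 ≤ a - 1›])]; ring
  have hε2 : ε^2 = 1 := by rcases hε with h | h <;> rw [h] <;> norm_num
  refine ⟨s, ε, hs1, hε, ?_, ?_, ?_⟩
  · apply Qeval_zero
    have hq : (-ε*s)^2 + (a-1)*(-ε*s) + 1 = 0 := by
      linear_combination s^2 * hε2 - s*hεm + hquad
    linear_combination (-ε*s + 1) * hq
  · apply Qeval_zero
    have hq : (-ε/s)^2 + (a-1)*(-ε/s) + 1 = 0 := by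
      field_simp
      nlinarith [hquad, hε2, hεm]
    linear_combination (-ε/s + 1) * hq
  · apply Qeval_zero; ring

lemma eval_three (P : Polynomial ℂ) (α β γ : ℕ) (h1 : α < β) (h2 : β < γ)
    (hsub : P.support ⊆ {α, β, γ}) (x : ℂ) :
    P.eval x = P.coeff α * x^α + P.coeff β * x^β + P.coeff γ * x^γ := by
  rw [eval_eq_sum, Polynomial.sum_def]
  rw [Finset.sum_subset hsub (fun e _ he => by
    rw [notMem_support_iff.mp he, zero_mul])]
  rw [show ({α, β, γ} : Finset ℕ) = insert α (insert β {γ}) from rfl]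
  rw [Finset.sum_insert (by simp; omega), Finset.sum_insert (by simp; omega),
    Finset.sum_singleton]
  ring

lemma exists_triple (F : Finset ℕ) (h : F.card ≤ 3) :
    ∃ α β γ : ℕ, α < β ∧ β < γ ∧ F ⊆ {α, β, γ} := by
  set N := F.sup id + 1 with hN
  have hsub : ({N, N+1, N+2} : Finset ℕ) ⊆ F ∪ {N, N+1, N+2} := Finset.subset_union_right
  have h3le : 3 ≤ (F ∪ ({N, N+1, N+2} : Finset ℕ)).card := by
    calc 3 = ({N, N+1, N+2} : Finset ℕ).card := by
            rw [Finset.card_insert_of_notMem (by simp), Finset.card_insert_of_notMem (by simp)]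
            simp
      _ ≤ _ := Finset.card_le_card hsub
  obtain ⟨T, hFT, _, hT3⟩ := Finset.exists_subsuperset_card_eq Finset.subset_union_left h h3le
  obtain ⟨x, y, z, hxy, hxz, hyz, rfl⟩ := Finset.card_eq_three.mp hT3
  have key : ∀ p q r : ℕ, p < q → q < r → ({x, y, z} : Finset ℕ) = {p, q, r} →
      ∃ α β γ : ℕ, α < β ∧ β < γ ∧ F ⊆ {α, β, γ} := by
    intro p q r hpq hqr hset
    exact ⟨p, q, r, hpq, hqr, hset ▸ hFT⟩
  rcases lt_trichotomy x y with h1 | h1 | h1 <;> [skip; exact absurd h1 hxy; skip] <;>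
    rcases lt_trichotomy y z with h2 | h2 | h2 <;> [skip; exact absurd h2 hyz; skip;
      skip; exact absurd h2 hyz; skip] <;>
    rcases lt_trichotomy x z with h3 | h3 | h3 <;> first
      | exact absurd h3 hxz
      | (first
        | exact key x y z (by omega) (by omega) (by ext t; simp only [Finset.mem_insert, Finset.mem_singleton]; try tauto)
        | exact key x z y (by omega) (by omega) (by ext t; simp only [Finset.mem_insert, Finset.mem_singleton]; try tauto)
        | exact key y x z (by omega) (by omega) (by ext t; simp only [Finset.mem_insert, Finset.mem_singleton]; try tauto)
        | exact key y z x (by omega) (by omega) (by ext t; simp only [Finset.mem_insert, Finset.mem_singleton]; try tauto)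
        | exact key z x y (by omega) (by omega) (by ext t; simp only [Finset.mem_insert, Finset.mem_singleton]; try tauto)
        | exact key z y x (by omega) (by omega) (by ext t; simp only [Finset.mem_insert, Finset.mem_singleton]; try tauto))

lemma Btmat_eq (n : ℕ) (hn : 1 ≤ n) (a : ℝ) (i : Fin (n+3)) (j : Fin n) :
    Btmat n a i j = if (j:ℕ) ≤ (i:ℕ) then qc a ((i:ℕ) - (j:ℕ)) else 0 := by
  rcases i with ⟨i, hi⟩; rcases j with ⟨j, hj⟩
  simp only [Btmat, Etent, qc, Matrix.of_apply]
  split_ifs <;> first | rfl | omega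

open Polynomial in
theorem stmt14 (a : ℝ) (ha : 5 < |a|) (n : ℕ) (hn : 1 ≤ n) :
    LinearIndependent ℂ
        (fun j : Fin n => fun i : Fin (n + 3) => ((Btmat n a i j : ℝ) : ℂ)) ∧
      ∀ lam : Fin n → ℂ,
        (fun i : Fin (n + 3) => ∑ j, lam j * ((Btmat n a i j : ℝ) : ℂ)) ≠ 0 →
        4 ≤ Set.ncard {i : Fin (n + 3) | ∑ j, lam j * ((Btmat n a i j : ℝ) : ℂ) ≠ 0} := by
  classical
  obtain ⟨s, ε, hs, hε, hr1, hr2, hr3⟩ := Qroots a ha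
  set Lp : (Fin n → ℂ) → Polynomial ℂ := fun lam => ∑ j : Fin n, C (lam j) * X^(j:ℕ) with hLp
  have coeffP : ∀ (lam : Fin n → ℂ) (k : ℕ), (Lp lam * Qpoly a).coeff k
      = ∑ j : Fin n, lam j * (if (j:ℕ) ≤ k then ((qc a (k - (j:ℕ)) : ℝ):ℂ) else 0) := by
    intro lam k
    rw [hLp]
    rw [Finset.sum_mul, finset_sum_coeff]
    refine Finset.sum_congr rfl fun j _ => ?_
    rw [mul_assoc, mul_comm (X^(j:ℕ)) (Qpoly a), coeff_C_mul, coeff_mul_X_pow']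
    simp only [Qcoeff]
  have hsum : ∀ (lam : Fin n → ℂ) (i : Fin (n+3)),
      ∑ j, lam j * ((Btmat n a i j : ℝ) : ℂ) = (Lp lam * Qpoly a).coeff (i:ℕ) := by
    intro lam i
    rw [coeffP]
    refine Finset.sum_congr rfl fun j _ => ?_
    rw [Btmat_eq n hn a i j, apply_ite (fun x : ℝ => (x:ℂ))]
    norm_num
  have hvanish : ∀ (lam : Fin n → ℂ) (k : ℕ), n + 3 ≤ k → (Lp lam * Qpoly a).coeff k = 0 := by
    intro lam k hk
    rw [coeffP]
    refine Finset.sum_eq_zero fun j _ => ?_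
    have hj := j.isLt
    rw [if_pos (by omega)]
    have hz : qc a (k - (j:ℕ)) = 0 := by
      unfold qc; rw [if_neg (by omega), if_neg (by omega), if_neg (by omega), if_neg (by omega)]
    rw [hz]
    norm_num
  have hLcoeff : ∀ (lam : Fin n → ℂ) (j : Fin n), (Lp lam).coeff (j:ℕ) = lam j := by
    intro lam j
    rw [hLp]
    rw [finset_sum_coeff]
    rw [Finset.sum_eq_single j (fun j' _ hne => by
      rw [coeff_C_mul, coeff_X_pow, if_neg (fun h => hne (Fin.ext h.symm)), mul_zero])
      (fun h => absurd (Finset.mem_univ j) h)]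
    rw [coeff_C_mul, coeff_X_pow, if_pos rfl, mul_one]
  have hPzero : ∀ lam : Fin n → ℂ, (∀ i : Fin (n+3), (Lp lam * Qpoly a).coeff (i:ℕ) = 0) →
      ∀ j, lam j = 0 := by
    intro lam h
    have hQne : Qpoly a ≠ 0 := by
      intro h0
      have h3 := Qcoeff a 3
      rw [h0] at h3
      simp [qc] at h3
    have hP : Lp lam * Qpoly a = 0 := by
      ext k
      rw [coeff_zero]
      by_cases hk : k < n + 3
      · exact h ⟨k, hk⟩
      · exact hvanish lam k (by omega)
    have hL : Lp lam = 0 := (mul_eq_zero.mp hP).resolve_right hQne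
    intro j
    rw [← hLcoeff lam j, hL, coeff_zero]
  constructor
  · rw [Fintype.linearIndependent_iff]
    intro g hg
    apply hPzero g
    intro i
    rw [← hsum g i]
    have := congrFun hg i
    simpa using this
  · intro lam hne
    have hPne : Lp lam * Qpoly a ≠ 0 := by
      intro h0
      apply hne
      funext i
      simp [hsum lam i, h0]
    have hcard : 4 ≤ (Lp lam * Qpoly a).support.card := by
      by_contra hlt
      push_neg at hlt
      obtain ⟨α, β, γ, hab, hbg, hsub⟩ := exists_triple ((Lp lam * Qpoly a).support) (by omega)
      have hev : ∀ x : ℂ, (Qpoly a).eval x = 0 →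
          (Lp lam * Qpoly a).coeff α * x^α + (Lp lam * Qpoly a).coeff β * x^β
            + (Lp lam * Qpoly a).coeff γ * x^γ = 0 := by
        intro x hx
        rw [← eval_three _ α β γ hab hbg hsub x, eval_mul, hx, mul_zero]
      have h1 := hev _ hr1
      have h2 := hev _ hr2
      have h3' := hev _ hr3
      rw [show (((-1:ℝ)):ℂ) = -1 by norm_num] at h3'
      obtain ⟨hA, hB, hC⟩ := key3 s ε hs hε α β γ hab hbg _ _ _ h1 h2 h3'
      apply hPne
      ext k
      rw [coeff_zero]
      by_cases hk : k ∈ (Lp lam * Qpoly a).support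
      · have := hsub hk
        simp only [Finset.mem_insert, Finset.mem_singleton] at this
        rcases this with rfl | rfl | rfl <;> assumption
      · exact notMem_support_iff.mp hk
    have hb : ∀ e ∈ (Lp lam * Qpoly a).support, e < n + 3 := by
      intro e he
      by_contra hge
      exact (mem_support_iff.mp he) (hvanish lam e (by omega))
    have hset : {i : Fin (n + 3) | ∑ j, lam j * ((Btmat n a i j : ℝ) : ℂ) ≠ 0}
        = ↑(Finset.univ.filter (fun i : Fin (n+3) => (Lp lam * Qpoly a).coeff (i:ℕ) ≠ 0)) := by
      ext i
      simp [hsum lam i]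
    rw [hset, Set.ncard_coe_finset]
    refine hcard.trans (le_of_eq (Finset.card_bij
      (fun e he => (⟨e, hb e he⟩ : Fin (n+3))) ?_ ?_ ?_))
    · intro e he
      simp [mem_support_iff.mp he]
    · intro e1 h1 e2 h2 h12
      simpa using congrArg Fin.val h12
    · intro i hi
      refine ⟨(i:ℕ), mem_support_iff.mpr (by simpa using hi), by simp⟩
end

section
/- Let m, n be natural numbers with m ≥ 4 and n ≥ 4, and let a be a real number with a = 3 or a > 5. Let 𝒮 ⊆ M_{m×n}(ℂ) be the complex linear span of the matrices S_{i,j}, for 2 ≤ i ≤ m−2 and 2 ≤ j ≤ n−2, where S_{i,j} is the m×n matrix whose only nonzero entries are: entry (i−2, j+1) equal to 1, entry (i−1, j) equal to −a, entry (i, j−1) equal to a, and entry (i+1, j−2) equal to −1 (rows indexed 0,…,m−1 and columns indexed 0,…,n−1). Then every nonzero matrix in 𝒮 has rank at least 4, and the dimension of 𝒮 over ℂ equals (m−3)(n−3). -/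
/-- The generator matrix `S_{i,j}` (rows indexed `0,…,m-1`, columns `0,…,n-1`):
its only nonzero entries are `(i-2, j+1) ↦ 1`, `(i-1, j) ↦ -a`, `(i, j-1) ↦ a`,
`(i+1, j-2) ↦ -1`. -/
def Sgen (m n : ℕ) (a : ℝ) (i j : ℕ) : Matrix (Fin m) (Fin n) ℂ :=
  Matrix.of fun r c =>
    if (r : ℕ) = i - 2 ∧ (c : ℕ) = j + 1 then 1
    else if (r : ℕ) = i - 1 ∧ (c : ℕ) = j then -(a : ℂ)
    else if (r : ℕ) = i ∧ (c : ℕ) = j - 1 then (a : ℂ)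
    else if (r : ℕ) = i + 1 ∧ (c : ℕ) = j - 2 then -1
    else 0

/-- Vandermonde-type elimination for exponents with weights 1, r, r². -/
lemma V3 (s : Finset ℕ) (hcard : s.card ≤ 3) (f : ℕ → ℂ)
    (h0 : ∑ r ∈ s, f r = 0) (h1 : ∑ r ∈ s, f r * (r : ℂ) = 0)
    (h2 : ∑ r ∈ s, f r * (r : ℂ) ^ 2 = 0) :
    ∀ r ∈ s, f r = 0 := by
  interval_cases h : s.card
  · simp [Finset.card_eq_zero.mp h]
  · obtain ⟨p, rfl⟩ := Finset.card_eq_one.mp h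
    simp only [Finset.sum_singleton] at h0
    simpa using h0
  · obtain ⟨p, q, hpq, rfl⟩ := Finset.card_eq_two.mp h
    rw [Finset.sum_pair hpq] at h0 h1
    have hpqC : (p : ℂ) ≠ (q : ℂ) := by exact_mod_cast hpq
    have hp : f p = 0 := by
      have key : f p * ((p : ℂ) - q) = 0 := by linear_combination h1 - (q : ℂ) * h0
      rcases mul_eq_zero.mp key with h | h
      · exact h
      · exact absurd (sub_eq_zero.mp h) hpqC
    have hq : f q = 0 := by linear_combination h0 - hp
    intro r hr
    rcases Finset.mem_insert.mp hr with rfl | hr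
    · exact hp
    · rw [Finset.mem_singleton.mp hr]; exact hq
  · obtain ⟨p, q, r, hpq, hpr, hqr, rfl⟩ := Finset.card_eq_three.mp h
    rw [Finset.sum_insert (by simp [hpq, hpr]), Finset.sum_pair hqr] at h0 h1 h2
    have hpqC : (p : ℂ) ≠ (q : ℂ) := by exact_mod_cast hpq
    have hprC : (p : ℂ) ≠ (r : ℂ) := by exact_mod_cast hpr
    have hqrC : (q : ℂ) ≠ (r : ℂ) := by exact_mod_cast hqr
    have hp : f p = 0 := by
      have key : f p * (((p : ℂ) - q) * ((p : ℂ) - r)) = 0 := by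
        linear_combination ((q : ℂ) * r) * h0 - ((q : ℂ) + r) * h1 + h2
      rcases mul_eq_zero.mp key with h | h
      · exact h
      · rcases mul_eq_zero.mp h with h | h
        · exact absurd (sub_eq_zero.mp h) hpqC
        · exact absurd (sub_eq_zero.mp h) hprC
    have hq : f q = 0 := by
      have key : f q * ((q : ℂ) - r) = 0 := by
        linear_combination h1 - (r : ℂ) * h0 - ((p : ℂ) - r) * hp
      rcases mul_eq_zero.mp key with h | h
      · exact h
      · exact absurd (sub_eq_zero.mp h) hqrC
    have hr : f r = 0 := by linear_combination h0 - hp - hq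
    intro x hx
    rcases Finset.mem_insert.mp hx with rfl | hx
    · exact hp
    rcases Finset.mem_insert.mp hx with rfl | hx
    · exact hq
    · rw [Finset.mem_singleton.mp hx]; exact hr

/-- Generalized-Vandermonde elimination for weights σ^r, 1, σ⁻¹^r with sorted exponents. -/
lemma Wsorted (σ : ℝ) (hσ0 : 0 < σ) (hσ1 : σ < 1) (p q r : ℕ) (hpq : p < q) (hqr : q < r)
    (α β γ : ℂ)
    (e1 : α * (σ : ℂ) ^ p + β * (σ : ℂ) ^ q + γ * (σ : ℂ) ^ r = 0)
    (e2 : α + β + γ = 0)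
    (e3 : α * ((σ : ℂ))⁻¹ ^ p + β * ((σ : ℂ))⁻¹ ^ q + γ * ((σ : ℂ))⁻¹ ^ r = 0) :
    α = 0 ∧ β = 0 ∧ γ = 0 := by
  have hσne : σ ≠ 0 := ne_of_gt hσ0
  have hσCne : (σ : ℂ) ≠ 0 := by exact_mod_cast hσne
  set u := q - p with hu
  set v := r - p with hv
  have hq' : q = p + u := by omega
  have hr' : r = p + v := by omega
  have hu1 : 1 ≤ u := by omega
  have huv : u < v := by omega
  set X : ℂ := (σ : ℂ) ^ u with hX
  set Y : ℂ := (σ : ℂ) ^ v with hY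
  have hXr : X = ((σ ^ u : ℝ) : ℂ) := by push_cast [hX]; ring
  have hYr : Y = ((σ ^ v : ℝ) : ℂ) := by push_cast [hY]; ring
  have hXlt1 : σ ^ u < 1 := pow_lt_one₀ hσ0.le hσ1 (by omega)
  have hYltX : σ ^ v < σ ^ u := pow_lt_pow_right_of_lt_one₀ hσ0 hσ1 huv
  have hX1 : X ≠ 1 := by
    rw [hXr]; exact_mod_cast ne_of_lt hXlt1
  have hY1 : Y ≠ 1 := by
    rw [hYr]
    exact_mod_cast ne_of_lt (lt_trans hYltX hXlt1)
  have hYX : Y ≠ X := by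
    rw [hXr, hYr]; exact_mod_cast ne_of_lt hYltX
  have hXne : X ≠ 0 := pow_ne_zero _ hσCne
  have hYne : Y ≠ 0 := pow_ne_zero _ hσCne
  have hpne : (σ : ℂ) ^ p ≠ 0 := pow_ne_zero _ hσCne
  -- normalized equations
  have E1 : α + β * X + γ * Y = 0 := by
    have : (α + β * X + γ * Y) * (σ : ℂ) ^ p = 0 := by
      rw [hq', hr'] at e1
      rw [hX, hY]
      linear_combination e1
    rcases mul_eq_zero.mp this with h | h
    · exact h
    · exact absurd h hpne
  have hpne' : ((σ : ℂ))⁻¹ ^ p ≠ 0 := pow_ne_zero _ (inv_ne_zero hσCne)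
  have E3 : α * (X * Y) + β * Y + γ * X = 0 := by
    have h3 : (α + β * X⁻¹ + γ * Y⁻¹) * ((σ : ℂ))⁻¹ ^ p = 0 := by
      rw [hq', hr'] at e3
      have hXi : ((σ : ℂ))⁻¹ ^ u = X⁻¹ := by rw [hX, inv_pow]
      have hYi : ((σ : ℂ))⁻¹ ^ v = Y⁻¹ := by rw [hY, inv_pow]
      rw [pow_add, pow_add, hXi, hYi] at e3
      linear_combination e3
    have h4 : α + β * X⁻¹ + γ * Y⁻¹ = 0 := by
      rcases mul_eq_zero.mp h3 with h | h
      · exact h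
      · exact absurd h hpne'
    field_simp at h4
    linear_combination h4
  have hγ : γ = 0 := by
    have key : γ * ((Y - 1) * (Y - X)) = 0 := by
      linear_combination Y * E1 + (-(X * Y) - Y) * e2 + E3
    rcases mul_eq_zero.mp key with h | h
    · exact h
    · rcases mul_eq_zero.mp h with h | h
      · exact absurd (sub_eq_zero.mp h) hY1
      · exact absurd (sub_eq_zero.mp h) hYX
  have hβ : β = 0 := by
    have key : β * (X - 1) = 0 := by
      linear_combination E1 - e2 + (1 - Y) * hγ
    rcases mul_eq_zero.mp key with h | h
    · exact h
    · exact absurd (sub_eq_zero.mp h) hX1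
  exact ⟨by linear_combination e2 - hβ - hγ, hβ, hγ⟩

lemma Wsym (σ : ℝ) (hσ0 : 0 < σ) (hσ1 : σ < 1) (p q r : ℕ) (hpq : p ≠ q) (hpr : p ≠ r)
    (hqr : q ≠ r) (α β γ : ℂ)
    (e1 : α * (σ : ℂ) ^ p + β * (σ : ℂ) ^ q + γ * (σ : ℂ) ^ r = 0)
    (e2 : α + β + γ = 0)
    (e3 : α * ((σ : ℂ))⁻¹ ^ p + β * ((σ : ℂ))⁻¹ ^ q + γ * ((σ : ℂ))⁻¹ ^ r = 0) :
    α = 0 ∧ β = 0 ∧ γ = 0 := by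
  rcases Nat.lt_trichotomy p q with h1 | h1 | h1
  · rcases Nat.lt_trichotomy q r with h2 | h2 | h2
    · exact Wsorted σ hσ0 hσ1 p q r h1 h2 α β γ e1 e2 e3
    · exact absurd h2 hqr
    · rcases Nat.lt_trichotomy p r with h3 | h3 | h3
      · obtain ⟨hα, hγ, hβ⟩ := Wsorted σ hσ0 hσ1 p r q h3 h2 α γ β
          (by linear_combination e1) (by linear_combination e2) (by linear_combination e3)
        exact ⟨hα, hβ, hγ⟩
      · exact absurd h3 hpr
      · obtain ⟨hγ, hα, hβ⟩ := Wsorted σ hσ0 hσ1 r p q h3 h1 γ α β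
          (by linear_combination e1) (by linear_combination e2) (by linear_combination e3)
        exact ⟨hα, hβ, hγ⟩
  · exact absurd h1 hpq
  · rcases Nat.lt_trichotomy p r with h2 | h2 | h2
    · obtain ⟨hβ, hα, hγ⟩ := Wsorted σ hσ0 hσ1 q p r h1 h2 β α γ
        (by linear_combination e1) (by linear_combination e2) (by linear_combination e3)
      exact ⟨hα, hβ, hγ⟩
    · exact absurd h2 hpr
    · rcases Nat.lt_trichotomy q r with h3 | h3 | h3
      · obtain ⟨hβ, hγ, hα⟩ := Wsorted σ hσ0 hσ1 q r p h3 h2 β γ α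
          (by linear_combination e1) (by linear_combination e2) (by linear_combination e3)
        exact ⟨hα, hβ, hγ⟩
      · exact absurd h3 hqr
      · obtain ⟨hγ, hβ, hα⟩ := Wsorted σ hσ0 hσ1 r q p h3 h1 γ β α
          (by linear_combination e1) (by linear_combination e2) (by linear_combination e3)
        exact ⟨hα, hβ, hγ⟩

lemma V3' (σ : ℝ) (hσ0 : 0 < σ) (hσ1 : σ < 1) (s : Finset ℕ) (hcard : s.card ≤ 3) (f : ℕ → ℂ)
    (e1 : ∑ r ∈ s, f r * (σ : ℂ) ^ r = 0) (e2 : ∑ r ∈ s, f r = 0)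
    (e3 : ∑ r ∈ s, f r * ((σ : ℂ))⁻¹ ^ r = 0) :
    ∀ r ∈ s, f r = 0 := by
  have hσCne : (σ : ℂ) ≠ 0 := by exact_mod_cast ne_of_gt hσ0
  interval_cases h : s.card
  · simp [Finset.card_eq_zero.mp h]
  · obtain ⟨p, rfl⟩ := Finset.card_eq_one.mp h
    simp only [Finset.sum_singleton] at e1
    intro x hx
    rw [Finset.mem_singleton.mp hx]
    rcases mul_eq_zero.mp e1 with h' | h'
    · exact h'
    · exact absurd h' (pow_ne_zero _ hσCne)
  · obtain ⟨p, q, hpq, rfl⟩ := Finset.card_eq_two.mp h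
    rw [Finset.sum_pair hpq] at e1 e2 e3
    obtain ⟨hp, hq, -⟩ := Wsym σ hσ0 hσ1 p q (p + q + 1) (by omega) (by omega) (by omega)
      (f p) (f q) 0 (by linear_combination e1) (by linear_combination e2)
      (by linear_combination e3)
    intro x hx
    rcases Finset.mem_insert.mp hx with rfl | hx
    · exact hp
    · rw [Finset.mem_singleton.mp hx]; exact hq
  · obtain ⟨p, q, r, hpq, hpr, hqr, rfl⟩ := Finset.card_eq_three.mp h
    rw [Finset.sum_insert (by simp [hpq, hpr]), Finset.sum_pair hqr] at e1 e2 e3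
    obtain ⟨hp, hq, hr⟩ := Wsym σ hσ0 hσ1 p q r hpq hpr hqr (f p) (f q) (f r) (by linear_combination e1) (by linear_combination e2) (by linear_combination e3)
    intro x hx
    rcases Finset.mem_insert.mp hx with rfl | hx
    · exact hp
    rcases Finset.mem_insert.mp hx with rfl | hx
    · exact hq
    · rw [Finset.mem_singleton.mp hx]; exact hr

/-- Extension-by-zero with a downward shift of 3. -/
def EE (e : ℕ → ℂ) (t : ℕ) : ℂ := if 3 ≤ t then e (t - 3) else 0

/-- Discrete convolution of `e` with the pattern `(1, -a, a, -1)`. -/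
def Qc (a : ℝ) (e : ℕ → ℂ) (r : ℕ) : ℂ :=
  EE e (r + 3) - (a : ℂ) * EE e (r + 2) + (a : ℂ) * EE e (r + 1) - EE e r

lemma EE_add_three (e : ℕ → ℂ) (t : ℕ) : EE e (t + 3) = e t := by
  simp [EE]

lemma Qc_support (a : ℝ) (e : ℕ → ℂ) (r : ℕ) (h : Qc a e r ≠ 0) :
    ∃ t, e t ≠ 0 ∧ t ≤ r ∧ r ≤ t + 3 := by
  by_contra hc
  push_neg at hc
  apply h
  have hz : ∀ j, j ≤ 3 → EE e (r + j) = 0 := by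
    intro j hj
    unfold EE
    split_ifs with h3
    · by_contra hne
      have := hc (r + j - 3) hne (by omega)
      omega
    · rfl
  have h0 := hz 0 (by omega)
  simp only [Nat.add_zero] at h0
  unfold Qc
  rw [hz 3 le_rfl, hz 2 (by omega), hz 1 (by omega), h0]
  ring

lemma Qc_weighted (a : ℝ) (K : ℕ) (e : ℕ → ℂ) (hK : ∀ t, e t ≠ 0 → t ≤ K)
    (w : ℕ → ℂ)
    (hw : ∀ t, w t - (a : ℂ) * w (t + 1) + (a : ℂ) * w (t + 2) - w (t + 3) = 0) :
    ∑ r ∈ Finset.range (K + 4), Qc a e r * w r = 0 := by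
  have trunc : ∀ (N : ℕ) (g : ℕ → ℂ), K + 1 ≤ N →
      ∑ v ∈ Finset.range N, e v * g v = ∑ v ∈ Finset.range (K + 1), e v * g v := by
    intro N g hN
    refine (Finset.sum_subset (Finset.range_subset_range.mpr hN) ?_).symm
    intro x hx hnx
    have hex : e x = 0 := by
      by_contra hne
      have := hK x hne
      simp only [Finset.mem_range] at hnx
      omega
    simp [hex]
  have h3 : ∑ r ∈ Finset.range (K + 4), EE e (r + 3) * w r
      = ∑ v ∈ Finset.range (K + 1), e v * w v := by
    simp only [EE_add_three]
    exact trunc (K + 4) w (by omega)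
  have h2 : ∑ r ∈ Finset.range (K + 4), EE e (r + 2) * w r
      = ∑ v ∈ Finset.range (K + 1), e v * w (v + 1) := by
    rw [show K + 4 = (K + 3) + 1 by omega, Finset.sum_range_succ']
    have hEE : ∀ i : ℕ, EE e (i + 1 + 2) = e i := fun i => by
      rw [show i + 1 + 2 = i + 3 by omega, EE_add_three]
    simp only [hEE]
    have hb : ∀ i : ℕ, ¬ (3 ≤ i) → EE e i = 0 := fun i hi => by simp [EE, hi]
    rw [hb (0 + 2) (by omega)]
    simp only [zero_mul, add_zero]
    exact trunc (K + 3) (fun v => w (v + 1)) (by omega)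
  have h1 : ∑ r ∈ Finset.range (K + 4), EE e (r + 1) * w r
      = ∑ v ∈ Finset.range (K + 1), e v * w (v + 2) := by
    rw [show K + 4 = (K + 3) + 1 by omega, Finset.sum_range_succ',
      show K + 3 = (K + 2) + 1 by omega, Finset.sum_range_succ']
    have hEE : ∀ i : ℕ, EE e (i + 1 + 1 + 1) = e i := fun i => by
      rw [show i + 1 + 1 + 1 = i + 3 by omega, EE_add_three]
    simp only [hEE]
    have hb : ∀ i : ℕ, ¬ (3 ≤ i) → EE e i = 0 := fun i hi => by simp [EE, hi]
    rw [hb (0 + 1 + 1) (by omega), hb (0 + 1) (by omega)]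
    simp only [zero_mul, add_zero]
    have : ∀ i : ℕ, e i * w (i + 1 + 1) = e i * w (i + 2) := fun i => by
      rw [show i + 1 + 1 = i + 2 by omega]
    simp only [this]
    exact trunc (K + 2) (fun v => w (v + 2)) (by omega)
  have h0 : ∑ r ∈ Finset.range (K + 4), EE e r * w r
      = ∑ v ∈ Finset.range (K + 1), e v * w (v + 3) := by
    rw [show K + 4 = (K + 3) + 1 by omega, Finset.sum_range_succ',
      show K + 3 = (K + 2) + 1 by omega, Finset.sum_range_succ',
      show K + 2 = (K + 1) + 1 by omega, Finset.sum_range_succ']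
    have hEE : ∀ i : ℕ, EE e (i + 1 + 1 + 1) = e i := fun i => by
      rw [show i + 1 + 1 + 1 = i + 3 by omega, EE_add_three]
    simp only [hEE]
    have hb : ∀ i : ℕ, ¬ (3 ≤ i) → EE e i = 0 := fun i hi => by simp [EE, hi]
    rw [hb (0 + 1 + 1) (by omega), hb (0 + 1) (by omega), hb 0 (by omega)]
    simp only [zero_mul, add_zero]
  have expand : ∑ r ∈ Finset.range (K + 4), Qc a e r * w r
      = (∑ r ∈ Finset.range (K + 4), EE e (r + 3) * w r)
        - (a : ℂ) * (∑ r ∈ Finset.range (K + 4), EE e (r + 2) * w r)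
        + (a : ℂ) * (∑ r ∈ Finset.range (K + 4), EE e (r + 1) * w r)
        - ∑ r ∈ Finset.range (K + 4), EE e r * w r := by
    rw [Finset.mul_sum, Finset.mul_sum, ← Finset.sum_sub_distrib, ← Finset.sum_add_distrib,
      ← Finset.sum_sub_distrib]
    refine Finset.sum_congr rfl fun r _ => ?_
    unfold Qc
    ring
  rw [expand, h3, h2, h1, h0, Finset.mul_sum, Finset.mul_sum, ← Finset.sum_sub_distrib,
    ← Finset.sum_add_distrib, ← Finset.sum_sub_distrib]
  refine Finset.sum_eq_zero fun v _ => ?_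
  linear_combination e v * hw v

lemma sigma_exists (a : ℝ) (ha : 5 < a) :
    ∃ σ : ℝ, 0 < σ ∧ σ < 1 ∧ σ ^ 2 - (a - 1) * σ + 1 = 0 := by
  set b := a - 1 with hb
  have hb4 : 4 < b := by simp [hb]; linarith
  have hd : (0 : ℝ) ≤ b ^ 2 - 4 := by nlinarith
  set d := Real.sqrt (b ^ 2 - 4) with hdd
  have hd2 : d ^ 2 = b ^ 2 - 4 := Real.sq_sqrt hd
  have hd0 : 0 ≤ d := Real.sqrt_nonneg _
  refine ⟨(b - d) / 2, ?_, ?_, ?_⟩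
  · have : d < b := by nlinarith
    linarith
  · have : b - 2 < d := by nlinarith
    linarith
  · field_simp
    nlinarith [hd2]

lemma key (a : ℝ) (ha : a = 3 ∨ 5 < a) (K : ℕ) (e : ℕ → ℂ)
    (hK : ∀ t, e t ≠ 0 → t ≤ K) (hne : ∃ t, e t ≠ 0) :
    ∃ r : Fin 4 → ℕ, StrictMono r ∧ ∀ i, Qc a e (r i) ≠ 0 := by
  classical
  set s := (Finset.range (K + 4)).filter (fun r => Qc a e r ≠ 0) with hs
  have hs_mem : ∀ r, Qc a e r ≠ 0 → r ∈ s := by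
    intro r h
    obtain ⟨t, het, h1, h2⟩ := Qc_support a e r h
    have := hK t het
    simp only [hs, Finset.mem_filter, Finset.mem_range]
    exact ⟨by omega, h⟩
  have hs_ne : ∀ r ∈ s, Qc a e r ≠ 0 := fun r hr => (Finset.mem_filter.mp hr).2
  have final : (∀ r, Qc a e r = 0) → False := by
    intro hQ
    set T := (Finset.range (K + 1)).filter (fun t => e t ≠ 0) with hT
    obtain ⟨t0, het0⟩ := hne
    have hTne : T.Nonempty := by
      refine ⟨t0, ?_⟩
      simp only [hT, Finset.mem_filter, Finset.mem_range]
      exact ⟨by have := hK t0 het0; omega, het0⟩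
    set tm := T.max' hTne with htm
    have hmax : ∀ u, e u ≠ 0 → u ≤ tm := by
      intro u hu
      refine T.le_max' u ?_
      simp only [hT, Finset.mem_filter, Finset.mem_range]
      exact ⟨by have := hK u hu; omega, hu⟩
    have hetm : e tm ≠ 0 := by
      have := T.max'_mem hTne
      rw [← htm] at this
      exact (Finset.mem_filter.mp this).2
    have h0 := hQ (tm + 3)
    unfold Qc at h0
    have k3 : EE e (tm + 3 + 3) = 0 := by
      rw [EE_add_three]
      by_contra h; have := hmax _ h; omega
    have k2 : EE e (tm + 3 + 2) = 0 := by
      rw [show tm + 3 + 2 = (tm + 2) + 3 by omega, EE_add_three]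
      by_contra h; have := hmax _ h; omega
    have k1 : EE e (tm + 3 + 1) = 0 := by
      rw [show tm + 3 + 1 = (tm + 1) + 3 by omega, EE_add_three]
      by_contra h; have := hmax _ h; omega
    have k0 : EE e (tm + 3) = e tm := EE_add_three e tm
    rw [k3, k2, k1, k0] at h0
    apply hetm
    linear_combination -h0
  have hcard : 4 ≤ s.card := by
    by_contra hlt
    push_neg at hlt
    have hcard3 : s.card ≤ 3 := by omega
    have hsum : ∀ w : ℕ → ℂ,
        (∀ t, w t - (a : ℂ) * w (t + 1) + (a : ℂ) * w (t + 2) - w (t + 3) = 0) →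
        ∑ r ∈ s, Qc a e r * w r = 0 := by
      intro w hw
      rw [Finset.sum_subset (Finset.filter_subset _ _)]
      · exact Qc_weighted a K e hK w hw
      · intro x hx hnx
        have : Qc a e x = 0 := by
          by_contra h
          exact hnx (Finset.mem_filter.mpr ⟨hx, h⟩)
        simp [this]
    have hQzero : ∀ r ∈ s, Qc a e r = 0 := by
      rcases ha with rfl | h5
      · have E0 := hsum (fun _ => 1) (by intro t; push_cast; ring)
        have E1 := hsum (fun t => (t : ℂ)) (by intro t; push_cast; ring)
        have E2 := hsum (fun t => (t : ℂ) ^ 2) (by intro t; push_cast; ring)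
        simp only [mul_one] at E0
        exact V3 s hcard3 _ E0 E1 E2
      · obtain ⟨σ, hσ0, hσ1, hσq⟩ := sigma_exists a h5
        have hσC : ((σ : ℂ)) ^ 2 - ((a : ℂ) - 1) * (σ : ℂ) + 1 = 0 := by
          exact_mod_cast congrArg (Complex.ofReal) hσq
        have hσCne : (σ : ℂ) ≠ 0 := by exact_mod_cast ne_of_gt hσ0
        have hcube : 1 - (a : ℂ) * σ + (a : ℂ) * (σ : ℂ) ^ 2 - (σ : ℂ) ^ 3 = 0 := by
          linear_combination (1 - (σ : ℂ)) * hσC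
        have hcubeinv : 1 - (a : ℂ) * (σ : ℂ)⁻¹ + (a : ℂ) * ((σ : ℂ)⁻¹) ^ 2
            - ((σ : ℂ)⁻¹) ^ 3 = 0 := by
          field_simp
          linear_combination ((σ : ℂ) - 1) * hσC
        have E1 := hsum (fun t => ((σ : ℂ)) ^ t) (by
          intro t
          have : ∀ j : ℕ, ((σ : ℂ)) ^ (t + j) = (σ : ℂ) ^ t * (σ : ℂ) ^ j := fun j =>
            pow_add _ _ _
          rw [this 1, this 2, this 3]
          linear_combination ((σ : ℂ)) ^ t * hcube)
        have E0 := hsum (fun _ => 1) (by intro t; push_cast; ring)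
        have E2 := hsum (fun t => ((σ : ℂ))⁻¹ ^ t) (by
          intro t
          have : ∀ j : ℕ, ((σ : ℂ))⁻¹ ^ (t + j) = (σ : ℂ)⁻¹ ^ t * (σ : ℂ)⁻¹ ^ j := fun j =>
            pow_add _ _ _
          rw [this 1, this 2, this 3]
          have h1 : ((σ : ℂ))⁻¹ ^ 1 = ((σ : ℂ)⁻¹) ^ 1 := rfl
          linear_combination ((σ : ℂ))⁻¹ ^ t * hcubeinv)
        simp only [mul_one] at E0
        exact V3' σ hσ0 hσ1 s hcard3 _ E1 E0 E2
    apply final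
    intro r
    by_contra h
    exact h (hQzero r (hs_mem r h))
  obtain ⟨t, hts, htcard⟩ := Finset.exists_subset_card_eq hcard
  have f := t.orderIsoOfFin htcard
  refine ⟨fun i => (f i : ℕ), ?_, ?_⟩
  · intro i j hij
    exact f.strictMono hij
  · intro i
    exact hs_ne _ (hts (f i).2)

lemma Sgen_shift_apply (m n : ℕ) (a : ℝ) (i j : ℕ) (r : Fin m) (c : Fin n) :
    Sgen m n a (i + 2) (j + 2) r c =
      if (r : ℕ) = i ∧ (c : ℕ) = j + 3 then 1
      else if (r : ℕ) = i + 1 ∧ (c : ℕ) = j + 2 then -(a : ℂ)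
      else if (r : ℕ) = i + 2 ∧ (c : ℕ) = j + 1 then (a : ℂ)
      else if (r : ℕ) = i + 3 ∧ (c : ℕ) = j then -1
      else 0 := rfl

section LI
variable (m n : ℕ) (a : ℝ)

lemma gen_li (hm : 4 ≤ m) (hn : 4 ≤ n) :
    LinearIndependent ℂ (fun p : Fin (m - 3) × Fin (n - 3) =>
      Sgen m n a ((p.1 : ℕ) + 2) ((p.2 : ℕ) + 2)) := by
  rw [Fintype.linearIndependent_iff]
  intro c hc
  suffices H : ∀ N : ℕ, ∀ p : Fin (m - 3) × Fin (n - 3), (p.1 : ℕ) = N → c p = 0 by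
    intro p; exact H p.1 p rfl
  intro N
  induction N using Nat.strong_induction_on with
  | _ N IH =>
    intro p hp
    have hrow : (N : ℕ) < m := by have := p.1.isLt; omega
    have hcol : (p.2 : ℕ) + 3 < n := by have := p.2.isLt; omega
    have hentry := congrFun (congrFun hc ⟨N, hrow⟩) ⟨(p.2 : ℕ) + 3, hcol⟩
    rw [Matrix.sum_apply] at hentry
    simp only [Matrix.smul_apply, smul_eq_mul] at hentry
    rw [Finset.sum_eq_single p] at hentry
    · rw [Sgen_shift_apply] at hentry
      simp only [hp, and_self, if_pos] at hentry
      simpa using hentry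
    · intro q _ hqp
      rw [Sgen_shift_apply]
      simp only [Fin.val_mk]
      split_ifs with h1 h2 h3 h4
      · exfalso
        apply hqp
        have h1' : (q.1 : ℕ) = (p.1 : ℕ) := by omega
        have h2' : (q.2 : ℕ) = (p.2 : ℕ) := by omega
        exact Prod.ext (Fin.ext (by omega)) (Fin.ext (by omega))
      · rw [IH q.1 (by omega) q (by omega)]; ring
      · rw [IH q.1 (by omega) q (by omega)]; ring
      · rw [IH q.1 (by omega) q (by omega)]; ring
      · ring
    · intro h
      exact absurd (Finset.mem_univ p) h
end LI

/-- The coefficient function extended by zero to all of `ℕ × ℕ`. -/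
def dfun (m n : ℕ) (c : Fin (m - 3) × Fin (n - 3) → ℂ) (x y : ℕ) : ℂ :=
  if h : x < m - 3 ∧ y < n - 3 then c (⟨x, h.1⟩, ⟨y, h.2⟩) else 0

/-- `dfun` shifted down by 3 in both coordinates. -/
def Dfun (m n : ℕ) (c : Fin (m - 3) × Fin (n - 3) → ℂ) (x y : ℕ) : ℂ :=
  if 3 ≤ x ∧ 3 ≤ y then dfun m n c (x - 3) (y - 3) else 0

lemma pick0 (m n : ℕ) (c : Fin (m - 3) × Fin (n - 3) → ℂ) (u v : ℕ) :
    (∑ q : Fin (m - 3) × Fin (n - 3), if (q.1 : ℕ) = u ∧ (q.2 : ℕ) = v then c q else 0)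
      = dfun m n c u v := by
  by_cases h : u < m - 3 ∧ v < n - 3
  · rw [Finset.sum_eq_single (⟨⟨u, h.1⟩, ⟨v, h.2⟩⟩ : Fin (m - 3) × Fin (n - 3))]
    · simp [dfun, h]
    · intro q _ hq
      rw [if_neg]
      rintro ⟨h1, h2⟩
      exact hq (Prod.ext (Fin.ext (by simpa using h1)) (Fin.ext (by simpa using h2)))
    · intro h'; exact absurd (Finset.mem_univ _) h'
  · rw [Finset.sum_eq_zero, eq_comm]
    · simp [dfun, h]
    · intro q _
      rw [if_neg]
      rintro ⟨h1, h2⟩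
      have := q.1.isLt
      have := q.2.isLt
      omega

lemma pickst (m n : ℕ) (c : Fin (m - 3) × Fin (n - 3) → ℂ) (s t : ℕ) (hs : s ≤ 3) (ht : t ≤ 3)
    (x y : ℕ) :
    (∑ q : Fin (m - 3) × Fin (n - 3), if x = (q.1 : ℕ) + s ∧ y = (q.2 : ℕ) + t then c q else 0)
      = Dfun m n c (x + 3 - s) (y + 3 - t) := by
  by_cases h : s ≤ x ∧ t ≤ y
  · have hiff : ∀ q : Fin (m - 3) × Fin (n - 3),
        (x = (q.1 : ℕ) + s ∧ y = (q.2 : ℕ) + t) ↔ ((q.1 : ℕ) = x - s ∧ (q.2 : ℕ) = y - t) := by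
      intro q; omega
    rw [Finset.sum_congr rfl (fun q _ => if_congr (hiff q) rfl rfl), pick0]
    unfold Dfun
    rw [if_pos ⟨by omega, by omega⟩]
    congr 1 <;> omega
  · rw [Finset.sum_eq_zero, eq_comm]
    · unfold Dfun
      rw [if_neg (by omega)]
    · intro q _
      rw [if_neg (by omega)]

lemma entry_formula (m n : ℕ) (a : ℝ) (c : Fin (m - 3) × Fin (n - 3) → ℂ)
    (r : Fin m) (cl : Fin n) :
    (∑ q : Fin (m - 3) × Fin (n - 3), c q • Sgen m n a ((q.1 : ℕ) + 2) ((q.2 : ℕ) + 2)) r cl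
      = Dfun m n c ((r : ℕ) + 3) (cl : ℕ)
        - (a : ℂ) * Dfun m n c ((r : ℕ) + 2) ((cl : ℕ) + 1)
        + (a : ℂ) * Dfun m n c ((r : ℕ) + 1) ((cl : ℕ) + 2)
        - Dfun m n c (r : ℕ) ((cl : ℕ) + 3) := by
  rw [Matrix.sum_apply]
  simp only [Matrix.smul_apply, smul_eq_mul]
  have hsplit : ∀ q : Fin (m - 3) × Fin (n - 3),
      c q * Sgen m n a ((q.1 : ℕ) + 2) ((q.2 : ℕ) + 2) r cl
        = (if (r : ℕ) = (q.1 : ℕ) + 0 ∧ (cl : ℕ) = (q.2 : ℕ) + 3 then c q else 0)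
          - (a : ℂ) * (if (r : ℕ) = (q.1 : ℕ) + 1 ∧ (cl : ℕ) = (q.2 : ℕ) + 2 then c q else 0)
          + (a : ℂ) * (if (r : ℕ) = (q.1 : ℕ) + 2 ∧ (cl : ℕ) = (q.2 : ℕ) + 1 then c q else 0)
          - (if (r : ℕ) = (q.1 : ℕ) + 3 ∧ (cl : ℕ) = (q.2 : ℕ) + 0 then c q else 0) := by
    intro q
    rw [Sgen_shift_apply]
    split_ifs <;> first | (exfalso; omega) | ring
  rw [Finset.sum_congr rfl fun q _ => hsplit q]
  rw [Finset.sum_sub_distrib, Finset.sum_add_distrib, Finset.sum_sub_distrib,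
    ← Finset.mul_sum, ← Finset.mul_sum]
  rw [pickst m n c 0 3 (by omega) (by omega), pickst m n c 1 2 (by omega) (by omega),
    pickst m n c 2 1 (by omega) (by omega), pickst m n c 3 0 (by omega) (by omega)]
  have e1 : (r : ℕ) + 3 - 0 = (r : ℕ) + 3 := by omega
  have e2 : (cl : ℕ) + 3 - 3 = (cl : ℕ) := by omega
  have e3 : (r : ℕ) + 3 - 1 = (r : ℕ) + 2 := by omega
  have e4 : (cl : ℕ) + 3 - 2 = (cl : ℕ) + 1 := by omega
  have e5 : (r : ℕ) + 3 - 2 = (r : ℕ) + 1 := by omega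
  have e6 : (cl : ℕ) + 3 - 1 = (cl : ℕ) + 2 := by omega
  have e7 : (r : ℕ) + 3 - 3 = (r : ℕ) := by omega
  have e8 : (cl : ℕ) + 3 - 0 = (cl : ℕ) + 3 := by omega
  rw [e1, e2, e3, e4, e5, e6, e7, e8]

def efun (m n : ℕ) (c : Fin (m - 3) × Fin (n - 3) → ℂ) (k t : ℕ) : ℂ :=
  if t ≤ k then dfun m n c t (k - t) else 0

lemma diag_term (m n : ℕ) (c : Fin (m - 3) × Fin (n - 3) → ℂ) (k : ℕ) (x y : ℕ)
    (hxy : x + y = k + 6) :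
    Dfun m n c x y = EE (efun m n c k) x := by
  unfold Dfun EE efun
  by_cases hx3 : 3 ≤ x
  · rw [if_pos hx3]
    by_cases h : x - 3 ≤ k
    · rw [if_pos (⟨hx3, by omega⟩ : 3 ≤ x ∧ 3 ≤ y), if_pos h,
        show y - 3 = k - (x - 3) by omega]
    · rw [if_neg (by omega : ¬(3 ≤ x ∧ 3 ≤ y)), if_neg h]
  · rw [if_neg (by omega : ¬(3 ≤ x ∧ 3 ≤ y)), if_neg hx3]

lemma diag_formula (m n : ℕ) (a : ℝ) (c : Fin (m - 3) × Fin (n - 3) → ℂ) (k : ℕ)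
    (r : Fin m) (cl : Fin n) (hrc : (r : ℕ) + (cl : ℕ) = k + 3) :
    Dfun m n c ((r : ℕ) + 3) (cl : ℕ)
      - (a : ℂ) * Dfun m n c ((r : ℕ) + 2) ((cl : ℕ) + 1)
      + (a : ℂ) * Dfun m n c ((r : ℕ) + 1) ((cl : ℕ) + 2)
      - Dfun m n c (r : ℕ) ((cl : ℕ) + 3)
      = Qc a (efun m n c k) (r : ℕ) := by
  unfold Qc
  rw [diag_term m n c k ((r : ℕ) + 3) (cl : ℕ) (by omega),
    diag_term m n c k ((r : ℕ) + 2) ((cl : ℕ) + 1) (by omega),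
    diag_term m n c k ((r : ℕ) + 1) ((cl : ℕ) + 2) (by omega),
    diag_term m n c k (r : ℕ) ((cl : ℕ) + 3) (by omega)]

lemma above_formula (m n : ℕ) (a : ℝ) (c : Fin (m - 3) × Fin (n - 3) → ℂ) (k : ℕ)
    (hk : ∀ x y, dfun m n c x y ≠ 0 → x + y ≤ k)
    (r : Fin m) (cl : Fin n) (hrc : k + 3 < (r : ℕ) + (cl : ℕ)) :
    Dfun m n c ((r : ℕ) + 3) (cl : ℕ)
      - (a : ℂ) * Dfun m n c ((r : ℕ) + 2) ((cl : ℕ) + 1)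
      + (a : ℂ) * Dfun m n c ((r : ℕ) + 1) ((cl : ℕ) + 2)
      - Dfun m n c (r : ℕ) ((cl : ℕ) + 3) = 0 := by
  have hz : ∀ x y : ℕ, k + 6 < x + y → Dfun m n c x y = 0 := by
    intro x y hxy
    unfold Dfun
    split_ifs with h
    · by_contra hne
      have := hk _ _ hne
      omega
    · rfl
  rw [hz _ _ (by omega), hz _ _ (by omega), hz _ _ (by omega), hz _ _ (by omega)]
  ring

theorem stmt15 (m n : ℕ) (hm : 4 ≤ m) (hn : 4 ≤ n) (a : ℝ) (ha : a = 3 ∨ 5 < a) :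
    (∀ M ∈ Submodule.span ℂ {M : Matrix (Fin m) (Fin n) ℂ |
        ∃ i j : ℕ, 2 ≤ i ∧ i ≤ m - 2 ∧ 2 ≤ j ∧ j ≤ n - 2 ∧ M = Sgen m n a i j},
      M ≠ 0 → 4 ≤ M.rank) ∧
    Module.finrank ℂ (Submodule.span ℂ {M : Matrix (Fin m) (Fin n) ℂ |
        ∃ i j : ℕ, 2 ≤ i ∧ i ≤ m - 2 ∧ 2 ≤ j ∧ j ≤ n - 2 ∧ M = Sgen m n a i j}) =
      (m - 3) * (n - 3) := by
  classical
  have hset : {M : Matrix (Fin m) (Fin n) ℂ |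
      ∃ i j : ℕ, 2 ≤ i ∧ i ≤ m - 2 ∧ 2 ≤ j ∧ j ≤ n - 2 ∧ M = Sgen m n a i j} =
      Set.range (fun p : Fin (m - 3) × Fin (n - 3) =>
        Sgen m n a ((p.1 : ℕ) + 2) ((p.2 : ℕ) + 2)) := by
    ext M
    constructor
    · rintro ⟨i, j, hi2, him, hj2, hjn, rfl⟩
      refine ⟨(⟨i - 2, by omega⟩, ⟨j - 2, by omega⟩), ?_⟩
      show Sgen m n a ((i - 2) + 2) ((j - 2) + 2) = Sgen m n a i j
      rw [show (i - 2) + 2 = i by omega, show (j - 2) + 2 = j by omega]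
    · rintro ⟨p, rfl⟩
      exact ⟨(p.1 : ℕ) + 2, (p.2 : ℕ) + 2, by omega,
        by have := p.1.isLt; omega, by omega, by have := p.2.isLt; omega, rfl⟩
  rw [hset]
  constructor
  · -- rank part
    intro M hM hM0
    obtain ⟨c, hc⟩ := (Submodule.mem_span_range_iff_exists_fun ℂ).mp hM
    have hcne : c ≠ 0 := by
      rintro rfl
      apply hM0
      rw [← hc]
      simp
    have hPne : (Finset.univ.filter (fun p : Fin (m - 3) × Fin (n - 3) => c p ≠ 0)).Nonempty := by
      rcases Function.ne_iff.mp hcne with ⟨p, hp⟩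
      exact ⟨p, Finset.mem_filter.mpr ⟨Finset.mem_univ _, hp⟩⟩
    set P := Finset.univ.filter (fun p : Fin (m - 3) × Fin (n - 3) => c p ≠ 0) with hP
    set k := P.sup' hPne (fun p => (p.1 : ℕ) + (p.2 : ℕ)) with hkdef
    have hk : ∀ x y, dfun m n c x y ≠ 0 → x + y ≤ k := by
      intro x y h
      unfold dfun at h
      split at h
      · rename_i hb
        have hmem : (⟨⟨x, hb.1⟩, ⟨y, hb.2⟩⟩ : Fin (m - 3) × Fin (n - 3)) ∈ P := by
          rw [hP]
          exact Finset.mem_filter.mpr ⟨Finset.mem_univ _, h⟩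
        exact Finset.le_sup' (fun p : Fin (m - 3) × Fin (n - 3) => (p.1 : ℕ) + (p.2 : ℕ)) hmem
      · exact absurd rfl h
    have heK : ∀ t, efun m n c k t ≠ 0 → t ≤ k := by
      intro t h
      unfold efun at h
      by_contra hc'
      rw [if_neg hc'] at h
      exact h rfl
    have heb : ∀ t, efun m n c k t ≠ 0 → t < m - 3 ∧ k - t < n - 3 := by
      intro t h
      unfold efun dfun at h
      split at h
      · split at h
        · rename_i hb
          exact hb
        · exact absurd rfl h
      · exact absurd rfl h
    have hene : ∃ t, efun m n c k t ≠ 0 := by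
      obtain ⟨p0, hp0P, hp0⟩ := Finset.exists_mem_eq_sup' hPne
        (fun p : Fin (m - 3) × Fin (n - 3) => (p.1 : ℕ) + (p.2 : ℕ))
      refine ⟨(p0.1 : ℕ), ?_⟩
      have hp0ne : c p0 ≠ 0 := by
        rw [hP] at hp0P
        exact (Finset.mem_filter.mp hp0P).2
      have hkp : k = (p0.1 : ℕ) + (p0.2 : ℕ) := hp0
      unfold efun dfun
      rw [if_pos (by omega), dif_pos (⟨p0.1.isLt, by
        rw [show k - (p0.1 : ℕ) = (p0.2 : ℕ) by omega]; exact p0.2.isLt⟩)]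
      convert hp0ne using 2
      refine Prod.ext (Fin.ext rfl) (Fin.ext ?_)
      show k - (p0.1 : ℕ) = (p0.2 : ℕ)
      omega
    have hdiag : ∀ (r : Fin m) (cl : Fin n), (r : ℕ) + (cl : ℕ) = k + 3 →
        M r cl = Qc a (efun m n c k) (r : ℕ) := by
      intro r cl hrc
      rw [← hc, entry_formula, diag_formula m n a c k r cl hrc]
    have habove : ∀ (r : Fin m) (cl : Fin n), k + 3 < (r : ℕ) + (cl : ℕ) → M r cl = 0 := by
      intro r cl hrc
      rw [← hc, entry_formula, above_formula m n a c k hk r cl hrc]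
    obtain ⟨rr, hrmono, hrne⟩ := key a ha k (efun m n c k) heK hene
    have hbounds : ∀ i : Fin 4, rr i < m ∧ rr i ≤ k + 3 ∧ k + 3 - rr i < n := by
      intro i
      obtain ⟨t, het, ht1, ht2⟩ := Qc_support a (efun m n c k) (rr i) (hrne i)
      have h1 := heK t het
      have h2 := (heb t het).1
      have h3 := (heb t het).2
      refine ⟨by omega, by omega, by omega⟩
    let ro : Fin 4 → Fin m := fun i => ⟨rr i, (hbounds i).1⟩
    let co : Fin 4 → Fin n := fun i => ⟨k + 3 - rr i, (hbounds i).2.2⟩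
    have hrole : ∀ i, (ro i : ℕ) = rr i := fun i => rfl
    have hcole : ∀ i, (co i : ℕ) = k + 3 - rr i := fun i => rfl
    set B := M.submatrix ro co with hB
    have hBtri : B.BlockTriangular id := by
      intro i j hij
      show M (ro i) (co j) = 0
      apply habove
      have h1 : rr j < rr i := hrmono hij
      have h2 := (hbounds j).2.1
      rw [hrole, hcole]
      omega
    have hBdiag : ∀ i, B i i ≠ 0 := by
      intro i
      have hd : M (ro i) (co i) = Qc a (efun m n c k) (rr i) := by
        have := hdiag (ro i) (co i) (by rw [hrole, hcole]; have := (hbounds i).2.1; omega)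
        rwa [hrole] at this
      show M (ro i) (co i) ≠ 0
      rw [hd]
      exact hrne i
    have hBdet : B.det ≠ 0 := by
      rw [Matrix.det_of_upperTriangular hBtri]
      exact Finset.prod_ne_zero_iff.mpr fun i _ => hBdiag i
    have hBrank : B.rank = 4 := by
      rw [Matrix.rank_of_isUnit B ((Matrix.isUnit_iff_isUnit_det B).mpr
        (isUnit_iff_ne_zero.mpr hBdet))]
      simp
    let Pm : Matrix (Fin 4) (Fin m) ℂ := Matrix.of fun i x => if x = ro i then 1 else 0
    let Qm : Matrix (Fin n) (Fin 4) ℂ := Matrix.of fun y j => if y = co j then 1 else 0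
    have hfac : B = Pm * M * Qm := by
      ext i j
      rw [hB, Matrix.submatrix_apply, Matrix.mul_apply]
      have hPM : ∀ y : Fin n, (Pm * M) i y = M (ro i) y := by
        intro y
        rw [Matrix.mul_apply]
        rw [Finset.sum_eq_single (ro i)]
        · simp [Pm]
        · intro x _ hx
          simp [Pm, hx]
        · intro h; exact absurd (Finset.mem_univ _) h
      simp only [hPM]
      rw [Finset.sum_eq_single (co j)]
      · simp [Qm]
      · intro y _ hy
        simp [Qm, hy]
      · intro h; exact absurd (Finset.mem_univ _) h
    have hle : B.rank ≤ M.rank := by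
      rw [hfac]
      exact le_trans (Matrix.rank_mul_le_left _ _) (Matrix.rank_mul_le_right _ _)
    omega
  · -- dimension part
    rw [finrank_span_eq_card (gen_li m n a hm hn)]
    simp
end
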